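/- Let C ⊆ {0,1}ⁿ be a neural code and c ∈ {0,1}ⁿ. If g ∈ CF(J_C) satisfies g(c) = 0, then g ∈ MP(C, {c}); moreover, for every index j with 1 ≤ j ≤ n, the reduced product (g·(x_j − c_j))_R is either 0, equal to g, or a proper polynomial multiple of g. -/

import Mathlib

open MvPolynomial

/-- The characteristic polynomial `ρ_v = ∏ i, (1 - v_i - x_i)` of a word `v ∈ {0,1}ⁿ = 𝔽₂ⁿ`. -/
noncomputable def rho (n : ℕ) (v : Fin n → ZMod 2) : MvPolynomial (Fin n) (ZMod 2) :=
  ∏ i, (1 - C (v i) - X i)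

/-- The neural ideal `J_C = ⟨ρ_v : v ∉ C⟩` of a neural code `C ⊆ {0,1}ⁿ`. -/
noncomputable def neuralIdeal (n : ℕ) (Co : Set (Fin n → ZMod 2)) :
    Ideal (MvPolynomial (Fin n) (ZMod 2)) :=
  Ideal.span { p | ∃ v, v ∉ Co ∧ p = rho n v }

/-- A pseudo-monomial: `∏_{i∈σ} x_i ∏_{j∈τ} (1 - x_j)` with `σ, τ` disjoint. -/
def IsPseudoMonomial (n : ℕ) (f : MvPolynomial (Fin n) (ZMod 2)) : Prop :=
  ∃ σ τ : Finset (Fin n), Disjoint σ τ ∧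
    f = (∏ i ∈ σ, X i) * ∏ j ∈ τ, (1 - X j)

/-- `f` is a minimal pseudo-monomial of the ideal `J`. -/
def IsMinimalPM (n : ℕ) (J : Ideal (MvPolynomial (Fin n) (ZMod 2)))
    (f : MvPolynomial (Fin n) (ZMod 2)) : Prop :=
  f ∈ J ∧ IsPseudoMonomial n f ∧
    ¬ ∃ g, IsPseudoMonomial n g ∧ g ∈ J ∧ g.totalDegree < f.totalDegree ∧
      ∃ h, f = g * h

/-- The canonical form `CF(J)`: the set of all minimal pseudo-monomials of `J`. -/
def CF (n : ℕ) (J : Ideal (MvPolynomial (Fin n) (ZMod 2))) :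
    Set (MvPolynomial (Fin n) (ZMod 2)) :=
  { f | IsMinimalPM n J f }

/-- An ideal is a pseudo-monomial ideal if it is generated by finitely many pseudo-monomials. -/
def IsPseudoMonomialIdeal (n : ℕ) (J : Ideal (MvPolynomial (Fin n) (ZMod 2))) : Prop :=
  ∃ S : Finset (MvPolynomial (Fin n) (ZMod 2)),
    (∀ f ∈ S, IsPseudoMonomial n f) ∧ J = Ideal.span (S : Set (MvPolynomial (Fin n) (ZMod 2)))

/-- A polynomial is square-free if every variable occurs with exponent at most 1
in every monomial of its support. -/
def IsSquareFreePoly (n : ℕ) (f : MvPolynomial (Fin n) (ZMod 2)) : Prop :=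
  ∀ m ∈ f.support, ∀ i, m i ≤ 1

/-- The Boolean ideal `B = ⟨x_i (1 - x_i) : 1 ≤ i ≤ n⟩`. -/
noncomputable def boolIdeal (n : ℕ) : Ideal (MvPolynomial (Fin n) (ZMod 2)) :=
  Ideal.span { p | ∃ i : Fin n, p = X i * (1 - X i) }

/-- The square-free representative `h_R` of `h` modulo the Boolean ideal:
replace every exponent by its truncation at 1. -/
noncomputable def sqReduce (n : ℕ) (h : MvPolynomial (Fin n) (ZMod 2)) :
    MvPolynomial (Fin n) (ZMod 2) :=
  ∑ m ∈ h.support,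
    monomial (Finsupp.mapRange (fun e => min e 1) (by simp) m) (coeff m h)

/-- The set of reduced products `P(C,D) = {(f g)_R : f ∈ CF(J_C), g ∈ CF(J_D)}`. -/
def reducedProducts (n : ℕ) (Co D : Set (Fin n → ZMod 2)) :
    Set (MvPolynomial (Fin n) (ZMod 2)) :=
  { p | ∃ f ∈ CF n (neuralIdeal n Co), ∃ g ∈ CF n (neuralIdeal n D), p = sqReduce n (f * g) }

/-- The set of minimal reduced products `MP(C,D)`. -/
def minReducedProducts (n : ℕ) (Co D : Set (Fin n → ZMod 2)) :
    Set (MvPolynomial (Fin n) (ZMod 2)) :=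
  { h | h ∈ reducedProducts n Co D ∧ h ≠ 0 ∧
    ¬ ∃ f ∈ reducedProducts n Co D, ∃ g : MvPolynomial (Fin n) (ZMod 2),
      1 ≤ g.totalDegree ∧ h = f * g }

/-- The code `C(U)` of a cover `U = {U_1, …, U_n}` of a topological space `X`. -/
def codeOfCover {X : Type*} [TopologicalSpace X] (n : ℕ) (U : Fin n → Set X) :
    Set (Fin n → ZMod 2) :=
  { v | ((⋂ i ∈ { i : Fin n | v i = 1 }, U i) \ ⋃ j ∈ { j : Fin n | v j = 0 }, U j).Nonempty }
open Finsupp in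
lemma sqReduce_eq_sum {n : ℕ} (h : MvPolynomial (Fin n) (ZMod 2)) :
    sqReduce n h = (AddMonoidAlgebra.coeff h).sum (fun m a => monomial (Finsupp.mapRange (fun e => min e 1) (by simp) m) a) := by
  rw [MvPolynomial.sum_def]; rfl

lemma sqReduce_add {n : ℕ} (p q : MvPolynomial (Fin n) (ZMod 2)) :
    sqReduce n (p + q) = sqReduce n p + sqReduce n q := by
  rw [sqReduce_eq_sum, sqReduce_eq_sum, sqReduce_eq_sum]
  rw [AddMonoidAlgebra.coeff_add]
  exact Finsupp.sum_add_index' (fun m => by simp) (fun m a b => by simp)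

lemma sqReduce_zero {n : ℕ} : sqReduce n 0 = 0 := by
  simp [sqReduce]

lemma sqReduce_monomial {n : ℕ} (m : Fin n →₀ ℕ) (a : ZMod 2) :
    sqReduce n (monomial m a) = monomial (Finsupp.mapRange (fun e => min e 1) (by simp) m) a := by
  rw [sqReduce_eq_sum, ← single_eq_monomial, AddMonoidAlgebra.coeff_single]
  exact Finsupp.sum_single_index (by simp)
lemma sqReduce_sub {n : ℕ} (p q : MvPolynomial (Fin n) (ZMod 2)) :
    sqReduce n (p - q) = sqReduce n p - sqReduce n q := by
  have := sqReduce_add (p - q) q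
  rw [sub_add_cancel] at this
  rw [this]; ring

lemma sqReduce_sum {n : ℕ} {α : Type*} (s : Finset α) (f : α → MvPolynomial (Fin n) (ZMod 2)) :
    sqReduce n (∑ a ∈ s, f a) = ∑ a ∈ s, sqReduce n (f a) := by
  classical
  induction s using Finset.induction with
  | empty => simp [sqReduce_zero]
  | insert _ _ ha ih => rename_i a s
                        rw [Finset.sum_insert ha, Finset.sum_insert ha, sqReduce_add, ih]

lemma trunc_add_single_eq {n : ℕ} (m : Fin n →₀ ℕ) (i : Fin n) :
    Finsupp.mapRange (fun e => min e 1) (by simp) (m + Finsupp.single i 1)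
      = Finsupp.mapRange (fun e => min e 1) (by simp) (m + Finsupp.single i 1 + Finsupp.single i 1) := by
  ext k
  simp only [Finsupp.mapRange_apply, Finsupp.add_apply, Finsupp.single_apply]
  by_cases hk : i = k <;> simp [hk]

lemma sqReduce_mul_gen {n : ℕ} (q : MvPolynomial (Fin n) (ZMod 2)) (i : Fin n) :
    sqReduce n (q * (X i * (1 - X i))) = 0 := by
  conv_lhs => rw [(support_sum_monomial_coeff q).symm]
  rw [Finset.sum_mul, sqReduce_sum]
  apply Finset.sum_eq_zero
  intro m hm
  have h1 : (monomial m (coeff m q)) * (X i * (1 - X i))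
      = monomial (m + Finsupp.single i 1) (coeff m q)
        - monomial (m + Finsupp.single i 1 + Finsupp.single i 1) (coeff m q) := by
    have hX : (X i : MvPolynomial (Fin n) (ZMod 2)) = monomial (Finsupp.single i 1) 1 := by
      rw [X]
    rw [hX]
    rw [mul_sub, mul_one]
    rw [mul_sub, monomial_mul, monomial_mul, mul_one, mul_one, monomial_mul, mul_one, add_assoc]
  rw [h1, sqReduce_sub, sqReduce_monomial, sqReduce_monomial, ← trunc_add_single_eq, sub_self]
lemma gen_mem_boolIdeal {n : ℕ} (i : Fin n) :
    (X i * (1 - X i) : MvPolynomial (Fin n) (ZMod 2)) ∈ boolIdeal n :=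
  Ideal.subset_span ⟨i, rfl⟩

lemma sqReduce_eq_zero_of_mem {n : ℕ} {b : MvPolynomial (Fin n) (ZMod 2)}
    (hb : b ∈ boolIdeal n) : sqReduce n b = 0 := by
  have H : ∀ r, sqReduce n (r * b) = 0 := by
    refine Submodule.span_induction
      (p := fun x _ => ∀ r, sqReduce n (r * x) = 0) ?_ ?_ ?_ ?_ hb
    · rintro x ⟨i, rfl⟩ r
      exact sqReduce_mul_gen _ i
    · intro r; rw [mul_zero, sqReduce_zero]
    · intro x y _ _ hx hy r
      rw [mul_add, sqReduce_add, hx, hy, add_zero]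
    · intro a x _ hx r
      rw [smul_eq_mul, ← mul_assoc, hx]
  simpa using H 1

lemma sqReduce_eq_of_sub_mem {n : ℕ} {p q : MvPolynomial (Fin n) (ZMod 2)}
    (h : p - q ∈ boolIdeal n) : sqReduce n p = sqReduce n q := by
  have : p = q + (p - q) := by ring
  rw [this, sqReduce_add, sqReduce_eq_zero_of_mem h, add_zero]

lemma sqReduce_eq_self {n : ℕ} {p : MvPolynomial (Fin n) (ZMod 2)}
    (hp : IsSquareFreePoly n p) : sqReduce n p = p := by
  conv_rhs => rw [← support_sum_monomial_coeff p]
  rw [sqReduce]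
  apply Finset.sum_congr rfl
  intro m hm
  have : Finsupp.mapRange (fun e => min e 1) (by simp) m = m := by
    ext k
    rw [Finsupp.mapRange_apply]
    exact min_eq_left (hp m hm k)
  rw [this]
lemma two_eq_zero' {n : ℕ} : (2 : MvPolynomial (Fin n) (ZMod 2)) = 0 := by
  have h : ((2 : ZMod 2)) = 0 := rfl
  rw [← map_ofNat (C : ZMod 2 →+* MvPolynomial (Fin n) (ZMod 2)) 2, h, map_zero]

lemma one_sub_X_eq {n : ℕ} (j : Fin n) :
    (1 - X j : MvPolynomial (Fin n) (ZMod 2)) = 1 + X j := by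
  linear_combination (-(X j : MvPolynomial (Fin n) (ZMod 2))) * two_eq_zero' (n := n)

lemma neg_eq' {n : ℕ} (p : MvPolynomial (Fin n) (ZMod 2)) : -p = p := by
  linear_combination (-p) * two_eq_zero' (n := n)

lemma mem_support_one {n : ℕ} {m : Fin n →₀ ℕ}
    (hm : m ∈ (1 : MvPolynomial (Fin n) (ZMod 2)).support) : m = 0 := by
  rw [← C_1, C_apply, support_monomial] at hm
  simp at hm
  · exact hm

lemma support_one_sub_X {n : ℕ} (j : Fin n) :
    (1 - X j : MvPolynomial (Fin n) (ZMod 2)).support ⊆ {0, Finsupp.single j 1} := by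
  rw [one_sub_X_eq]
  refine support_add.trans ?_
  intro m hm
  rcases Finset.mem_union.mp hm with h | h
  · simp [mem_support_one h]
  · rw [support_X] at h
    simp at h
    simp [h]

lemma support_linprod {n : ℕ} (u : Finset (Fin n)) (f : Fin n → MvPolynomial (Fin n) (ZMod 2))
    (hf : ∀ k ∈ u, (f k).support ⊆ {0, Finsupp.single k 1}) :
    ∀ m ∈ (∏ k ∈ u, f k).support, ∀ i, m i ≤ (if i ∈ u then 1 else 0) := by
  classical
  induction u using Finset.induction with
  | empty =>
    intro m hm i
    rw [Finset.prod_empty] at hm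
    simp [mem_support_one hm]
  | insert _ _ ha ih =>
    rename_i a u
    intro m hm i
    rw [Finset.prod_insert ha] at hm
    obtain ⟨m₁, hm₁, m₂, hm₂, rfl⟩ := Finset.mem_add.mp (support_mul _ _ hm)
    have h1 : m₁ i ≤ if i = a then 1 else 0 := by
      have hh := hf a (Finset.mem_insert_self a u) hm₁
      rcases Finset.mem_insert.mp hh with h | h
      · subst h; simp
      · simp only [Finset.mem_singleton] at h
        subst h
        by_cases hia : i = a
        · subst hia; simp [Finsupp.single_apply]
        · rw [Finsupp.single_apply, if_neg (fun h => hia h.symm), if_neg hia]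
    have h2 : m₂ i ≤ if i ∈ u then 1 else 0 :=
      ih (fun k hk => hf k (Finset.mem_insert_of_mem hk)) m₂ hm₂ i
    rw [Finsupp.add_apply]
    by_cases hia : i = a
    · subst hia
      rw [if_pos (Finset.mem_insert_self i u)]
      rw [if_pos rfl] at h1
      rw [if_neg ha] at h2
      omega
    · rw [if_neg hia] at h1
      by_cases hiu : i ∈ u
      · rw [if_pos hiu] at h2
        rw [if_pos (Finset.mem_insert_of_mem hiu)]
        omega
      · rw [if_neg hiu] at h2
        rw [if_neg (by simp [hia, hiu])]
        omega

lemma F_eq_prod {n : ℕ} {σ τ : Finset (Fin n)} (hd : Disjoint σ τ) :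
    ((∏ i ∈ σ, X i) * ∏ j ∈ τ, (1 - X j) : MvPolynomial (Fin n) (ZMod 2))
      = ∏ k ∈ σ ∪ τ, (if k ∈ σ then X k else 1 - X k) := by
  rw [Finset.prod_union hd]
  congr 1
  · exact Finset.prod_congr rfl fun k hk => (if_pos hk).symm
  · exact Finset.prod_congr rfl fun k hk => (if_neg (Finset.disjoint_right.mp hd hk)).symm

lemma pm_squarefree {n : ℕ} {σ τ : Finset (Fin n)} (hd : Disjoint σ τ) :
    IsSquareFreePoly n ((∏ i ∈ σ, X i) * ∏ j ∈ τ, (1 - X j)) := by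
  intro m hm i
  rw [F_eq_prod hd] at hm
  have := support_linprod (σ ∪ τ) _ (fun k _ => by
    split
    · rw [support_X]; intro x hx; simp at hx; simp [hx]
    · exact support_one_sub_X k) m hm i
  split at this <;> omega

lemma eval_pm_pt {n : ℕ} {σ τ : Finset (Fin n)} (hd : Disjoint σ τ) :
    eval (fun k => if k ∈ σ then (1 : ZMod 2) else 0)
      ((∏ i ∈ σ, X i) * ∏ j ∈ τ, (1 - X j)) = 1 := by
  rw [map_mul, map_prod, map_prod]
  have h1 : ∀ k ∈ σ, eval (fun k => if k ∈ σ then (1 : ZMod 2) else 0) (X k) = 1 := by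
    intro k hk; rw [eval_X, if_pos hk]
  have h2 : ∀ k ∈ τ, eval (fun k => if k ∈ σ then (1 : ZMod 2) else 0) (1 - X k) = 1 := by
    intro k hk
    rw [map_sub, map_one, eval_X, if_neg (Finset.disjoint_right.mp hd hk), sub_zero]
  rw [Finset.prod_congr rfl h1, Finset.prod_congr rfl h2,
    Finset.prod_const_one, Finset.prod_const_one, one_mul]

lemma pm_ne_zero {n : ℕ} {σ τ : Finset (Fin n)} (hd : Disjoint σ τ) :
    ((∏ i ∈ σ, X i) * ∏ j ∈ τ, (1 - X j) : MvPolynomial (Fin n) (ZMod 2)) ≠ 0 := by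
  intro h
  have := eval_pm_pt hd
  rw [h, map_zero] at this
  exact absurd this (by decide)
lemma absorb_X {n : ℕ} {σ τ : Finset (Fin n)} {k : Fin n} (hk : k ∈ σ) :
    ((∏ i ∈ σ, X i) * ∏ j ∈ τ, (1 - X j)) * X k
      - (∏ i ∈ σ, X i) * ∏ j ∈ τ, (1 - X j) ∈ boolIdeal n := by
  have hF : ((∏ i ∈ σ, X i) * ∏ j ∈ τ, (1 - X j) : MvPolynomial (Fin n) (ZMod 2))
      = X k * ((∏ i ∈ σ.erase k, X i) * ∏ j ∈ τ, (1 - X j)) := by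
    rw [← mul_assoc, Finset.mul_prod_erase σ _ hk]
  have key : (((∏ i ∈ σ, X i) * ∏ j ∈ τ, (1 - X j) : MvPolynomial (Fin n) (ZMod 2))) * X k
      - (∏ i ∈ σ, X i) * ∏ j ∈ τ, (1 - X j)
      = -(((∏ i ∈ σ.erase k, X i) * ∏ j ∈ τ, (1 - X j)) * (X k * (1 - X k))) := by
    rw [hF]; ring
  rw [key]
  exact neg_mem (Ideal.mul_mem_left _ _ (gen_mem_boolIdeal k))

lemma absorb_one_sub_X {n : ℕ} {σ τ : Finset (Fin n)} {k : Fin n} (hk : k ∈ τ) :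
    ((∏ i ∈ σ, X i) * ∏ j ∈ τ, (1 - X j)) * (1 - X k)
      - (∏ i ∈ σ, X i) * ∏ j ∈ τ, (1 - X j) ∈ boolIdeal n := by
  have hF : ((∏ i ∈ σ, X i) * ∏ j ∈ τ, (1 - X j) : MvPolynomial (Fin n) (ZMod 2))
      = (1 - X k) * ((∏ i ∈ σ, X i) * ∏ j ∈ τ.erase k, (1 - X j)) := by
    rw [← Finset.mul_prod_erase τ _ hk]; ring
  have key : (((∏ i ∈ σ, X i) * ∏ j ∈ τ, (1 - X j) : MvPolynomial (Fin n) (ZMod 2))) * (1 - X k)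
      - (∏ i ∈ σ, X i) * ∏ j ∈ τ, (1 - X j)
      = -(((∏ i ∈ σ, X i) * ∏ j ∈ τ.erase k, (1 - X j)) * (X k * (1 - X k))) := by
    rw [hF]; ring
  rw [key]
  exact neg_mem (Ideal.mul_mem_left _ _ (gen_mem_boolIdeal k))

lemma absorb_mul {n : ℕ} {F a d : MvPolynomial (Fin n) (ZMod 2)}
    (ha : F * a - F ∈ boolIdeal n) (hd : F * d - F ∈ boolIdeal n) :
    F * (a * d) - F ∈ boolIdeal n := by
  have : F * (a * d) - F = (F * a - F) * d + (F * d - F) := by ring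
  rw [this]
  exact add_mem (Ideal.mul_mem_right _ _ ha) hd

lemma absorb_prod {n : ℕ} {σ τ : Finset (Fin n)} {A B' : Finset (Fin n)}
    (hA : A ⊆ σ) (hB : B' ⊆ τ) :
    ((∏ i ∈ σ, X i) * ∏ j ∈ τ, (1 - X j)) * ((∏ i ∈ A, X i) * ∏ j ∈ B', (1 - X j))
      - (∏ i ∈ σ, X i) * ∏ j ∈ τ, (1 - X j) ∈ boolIdeal n := by
  classical
  have hA' : ∀ (A : Finset (Fin n)), A ⊆ σ →
      ((∏ i ∈ σ, X i) * ∏ j ∈ τ, (1 - X j)) * (∏ i ∈ A, X i)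
        - (∏ i ∈ σ, X i) * ∏ j ∈ τ, (1 - X j) ∈ boolIdeal n := by
    intro A
    induction A using Finset.induction with
    | empty => intro _; simp
    | insert _ _ ha ih =>
      rename_i a A
      intro hsub
      rw [Finset.prod_insert ha]
      exact absorb_mul (absorb_X (hsub (Finset.mem_insert_self a A)))
        (ih (fun x hx => hsub (Finset.mem_insert_of_mem hx)))
  have hB' : ∀ (B' : Finset (Fin n)), B' ⊆ τ →
      ((∏ i ∈ σ, X i) * ∏ j ∈ τ, (1 - X j)) * (∏ j ∈ B', (1 - X j))
        - (∏ i ∈ σ, X i) * ∏ j ∈ τ, (1 - X j) ∈ boolIdeal n := by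
    intro B'
    induction B' using Finset.induction with
    | empty => intro _; simp
    | insert _ _ hb ih =>
      rename_i b B'
      intro hsub
      rw [Finset.prod_insert hb]
      exact absorb_mul (absorb_one_sub_X (hsub (Finset.mem_insert_self b B')))
        (ih (fun x hx => hsub (Finset.mem_insert_of_mem hx)))
  exact absorb_mul (hA' A hA) (hB' B' hB)

lemma totalDegree_X_mul' {n : ℕ} {p : MvPolynomial (Fin n) (ZMod 2)} (hp : p ≠ 0) (k : Fin n) :
    (X k * p).totalDegree = p.totalDegree + 1 := by
  apply le_antisymm
  · refine (totalDegree_mul _ _).trans ?_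
    rw [totalDegree_X]
    omega
  · obtain ⟨m, hm, hdeg⟩ := Finset.exists_mem_eq_sup p.support
      (support_nonempty.mpr hp) (fun s => s.sum fun _ e => e)
    have hmem : Finsupp.single k 1 + m ∈ (X k * p).support := by
      rw [support_X_mul]
      exact Finset.mem_map_of_mem _ hm
    have hle := le_totalDegree hmem
    have hsum : (Finsupp.single k 1 + m).sum (fun _ e => e)
        = (Finsupp.single k 1).sum (fun _ e => e) + m.sum (fun _ e => e) :=
      Finsupp.sum_add_index' (fun _ => rfl) (fun _ _ _ => rfl)
    have hs : (Finsupp.single k 1).sum (fun _ e => e) = 1 := Finsupp.sum_single_index rfl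
    rw [hsum, hs] at hle
    have hdeg' : p.totalDegree = m.sum (fun _ e => e) := hdeg
    omega

lemma X_mul_ne_zero {n : ℕ} {p : MvPolynomial (Fin n) (ZMod 2)} (hp : p ≠ 0) (k : Fin n) :
    X k * p ≠ 0 := by
  intro h
  have := totalDegree_X_mul' hp k
  rw [h, totalDegree_zero] at this
  omega

lemma totalDegree_one_sub_X_mul {n : ℕ} {p : MvPolynomial (Fin n) (ZMod 2)} (hp : p ≠ 0)
    (k : Fin n) : ((1 - X k) * p).totalDegree = p.totalDegree + 1 := by
  have key : (1 - X k) * p = -(X k * p) + p := by ring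
  rw [key, totalDegree_add_eq_left_of_totalDegree_lt, totalDegree_neg,
    totalDegree_X_mul' hp k]
  rw [totalDegree_neg, totalDegree_X_mul' hp k]
  omega

lemma one_sub_X_mul_ne_zero {n : ℕ} {p : MvPolynomial (Fin n) (ZMod 2)} (hp : p ≠ 0)
    (k : Fin n) : (1 - X k) * p ≠ 0 := by
  intro h
  have := totalDegree_one_sub_X_mul hp k
  rw [h, totalDegree_zero] at this
  omega

lemma prodlin_mul_deg {n : ℕ} (u : Finset (Fin n)) (f : Fin n → MvPolynomial (Fin n) (ZMod 2))
    (hf : ∀ k ∈ u, f k = X k ∨ f k = 1 - X k) :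
    ∀ p : MvPolynomial (Fin n) (ZMod 2), p ≠ 0 →
      (∏ k ∈ u, f k) * p ≠ 0 ∧ ((∏ k ∈ u, f k) * p).totalDegree = p.totalDegree + u.card := by
  classical
  induction u using Finset.induction with
  | empty => intro p hp; simp [hp]
  | insert _ _ ha ih =>
    rename_i a u
    intro p hp
    obtain ⟨hq0, hqd⟩ := ih (fun k hk => hf k (Finset.mem_insert_of_mem hk)) p hp
    rw [Finset.prod_insert ha, mul_assoc]
    rcases hf a (Finset.mem_insert_self a u) with h | h
    · rw [h]
      refine ⟨X_mul_ne_zero hq0 a, ?_⟩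
      rw [totalDegree_X_mul' hq0 a, hqd, Finset.card_insert_of_notMem ha]
      omega
    · rw [h]
      refine ⟨one_sub_X_mul_ne_zero hq0 a, ?_⟩
      rw [totalDegree_one_sub_X_mul hq0 a, hqd, Finset.card_insert_of_notMem ha]
      omega

lemma pm_mul_deg {n : ℕ} {σ τ : Finset (Fin n)} (hd : Disjoint σ τ)
    {p : MvPolynomial (Fin n) (ZMod 2)} (hp : p ≠ 0) :
    (((∏ i ∈ σ, X i) * ∏ j ∈ τ, (1 - X j)) * p).totalDegree
      = p.totalDegree + (σ ∪ τ).card := by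
  rw [F_eq_prod hd]
  exact (prodlin_mul_deg (σ ∪ τ) _ (fun k _ => by split <;> simp [*]) p hp).2

lemma pm_deg {n : ℕ} {σ τ : Finset (Fin n)} (hd : Disjoint σ τ) :
    ((∏ i ∈ σ, X i) * ∏ j ∈ τ, (1 - X j) : MvPolynomial (Fin n) (ZMod 2)).totalDegree
      = (σ ∪ τ).card := by
  have := pm_mul_deg hd (p := 1) one_ne_zero
  rw [mul_one, totalDegree_one] at this
  omega
lemma sum_rho {n : ℕ} : ∑ v : Fin n → ZMod 2, rho n v = 1 := by
  unfold rho
  have key := Finset.prod_univ_sum (fun _ : Fin n => (Finset.univ : Finset (ZMod 2)))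
    (fun i a => (1 - C a - X i : MvPolynomial (Fin n) (ZMod 2)))
  rw [Fintype.piFinset_univ] at key
  rw [← key]
  apply Finset.prod_eq_one
  intro i _
  have huniv : (Finset.univ : Finset (ZMod 2)) = {0, 1} := by decide
  rw [huniv, Finset.sum_insert (by decide), Finset.sum_singleton, map_zero, map_one]
  linear_combination (-(X i : MvPolynomial (Fin n) (ZMod 2))) * two_eq_zero' (n := n)

lemma pm_mem_neuralIdeal {n : ℕ} {Co : Set (Fin n → ZMod 2)}
    {f : MvPolynomial (Fin n) (ZMod 2)}
    (hf : IsPseudoMonomial n f) (hv : ∀ v ∈ Co, eval v f = 0) : f ∈ neuralIdeal n Co := by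
  classical
  obtain ⟨σ, τ, hd, rfl⟩ := hf
  have hsum : ((∏ i ∈ σ, X i) * ∏ j ∈ τ, (1 - X j) : MvPolynomial (Fin n) (ZMod 2))
      = ∑ v : Fin n → ZMod 2, ((∏ i ∈ σ, X i) * ∏ j ∈ τ, (1 - X j)) * rho n v := by
    rw [← Finset.mul_sum, sum_rho, mul_one]
  rw [hsum]
  refine Ideal.sum_mem _ (fun v _ => ?_)
  set w : Fin n → ZMod 2 := fun k => if k ∈ σ then 1 else if k ∈ τ then 0 else v k with hw
  have hcompl : ∏ k ∈ (σ ∪ τ)ᶜ, (1 - C (w k) - X k : MvPolynomial (Fin n) (ZMod 2))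
      = ∏ k ∈ (σ ∪ τ)ᶜ, (1 - C (v k) - X k) := by
    refine Finset.prod_congr rfl fun k hk => ?_
    have hk' := Finset.mem_compl.mp hk
    have h1 : k ∉ σ := fun h => hk' (Finset.mem_union_left _ h)
    have h2 : k ∉ τ := fun h => hk' (Finset.mem_union_right _ h)
    simp [hw, h1, h2]
  have hrw : rho n w = ((∏ i ∈ σ, X i) * ∏ j ∈ τ, (1 - X j))
      * ∏ k ∈ (σ ∪ τ)ᶜ, (1 - C (v k) - X k) := by
    unfold rho
    rw [← Finset.prod_mul_prod_compl (σ ∪ τ) (fun k => 1 - C (w k) - X k), hcompl,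
      Finset.prod_union hd]
    congr 1
    congr 1
    · refine Finset.prod_congr rfl fun k hk => ?_
      have hwk : w k = 1 := by simp [hw, hk]
      rw [hwk, map_one]
      have h1 : (1 : MvPolynomial (Fin n) (ZMod 2)) - 1 - X k = -(X k) := by ring
      rw [h1, neg_eq']
    · refine Finset.prod_congr rfl fun k hk => ?_
      have hwk : w k = 0 := by simp [hw, Finset.disjoint_right.mp hd hk, hk]
      rw [hwk, map_zero, sub_zero]
  have hrv : rho n v = (∏ k ∈ σ ∪ τ, (1 - C (v k) - X k))
      * ∏ k ∈ (σ ∪ τ)ᶜ, (1 - C (v k) - X k) :=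
    (Finset.prod_mul_prod_compl _ _).symm
  have hid : ((∏ i ∈ σ, X i) * ∏ j ∈ τ, (1 - X j)) * rho n v
      = rho n w * ∏ k ∈ σ ∪ τ, (1 - C (v k) - X k) := by
    rw [hrv, hrw]; ring
  rw [hid]
  have hwF : eval w ((∏ i ∈ σ, X i) * ∏ j ∈ τ, (1 - X j)) = 1 := by
    rw [map_mul, map_prod, map_prod]
    have h1 : ∀ k ∈ σ, eval w (X k) = 1 := fun k hk => by
      rw [eval_X]; simp [hw, hk]
    have h2 : ∀ k ∈ τ, eval w (1 - X k) = 1 := fun k hk => by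
      rw [map_sub, map_one, eval_X]
      have : w k = 0 := by simp [hw, Finset.disjoint_right.mp hd hk, hk]
      rw [this, sub_zero]
    rw [Finset.prod_congr rfl h1, Finset.prod_congr rfl h2,
      Finset.prod_const_one, Finset.prod_const_one, one_mul]
  have hwCo : w ∉ Co := by
    intro h
    rw [hv w h] at hwF
    exact absurd hwF (by decide)
  exact Ideal.mul_mem_right _ _ (Ideal.subset_span ⟨w, hwCo, rfl⟩)

lemma eval_eq_zero_of_mem_neuralIdeal {n : ℕ} {D : Set (Fin n → ZMod 2)}
    {p : MvPolynomial (Fin n) (ZMod 2)} (hp : p ∈ neuralIdeal n D)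
    {c : Fin n → ZMod 2} (hc : c ∈ D) : eval c p = 0 := by
  have hle : neuralIdeal n D ≤ RingHom.ker (eval c) := by
    rw [neuralIdeal, Ideal.span_le]
    rintro q ⟨v, hv, rfl⟩
    rw [SetLike.mem_coe, RingHom.mem_ker]
    have hne : v ≠ c := fun h => hv (h ▸ hc)
    obtain ⟨i, hi⟩ := Function.ne_iff.mp hne
    unfold rho
    rw [map_prod]
    apply Finset.prod_eq_zero (Finset.mem_univ i)
    rw [map_sub, map_sub, eval_C, eval_X, map_one]
    exact (by decide : ∀ a b : ZMod 2, a ≠ b → 1 - a - b = 0) (v i) (c i) hi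
  exact hle hp

lemma eval_eq_zero_of_mem_boolIdeal {n : ℕ} {p : MvPolynomial (Fin n) (ZMod 2)}
    (hp : p ∈ boolIdeal n) (v : Fin n → ZMod 2) : eval v p = 0 := by
  have hle : boolIdeal n ≤ RingHom.ker (eval v) := by
    rw [boolIdeal, Ideal.span_le]
    rintro q ⟨i, rfl⟩
    rw [SetLike.mem_coe, RingHom.mem_ker]
    rw [map_mul, map_sub, map_one, eval_X]
    exact (by decide : ∀ a : ZMod 2, a * (1 - a) = 0) (v i)
  exact hle hp
lemma pm_prod_decomp {n : ℕ} {σ₁ τ₁ σ₂ τ₂ : Finset (Fin n)} :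
    (((∏ i ∈ σ₁, X i) * ∏ j ∈ τ₁, (1 - X j)) * ((∏ i ∈ σ₂, X i) * ∏ j ∈ τ₂, (1 - X j))
      : MvPolynomial (Fin n) (ZMod 2))
    = ((∏ i ∈ σ₁ ∪ σ₂, X i) * ∏ j ∈ τ₁ ∪ τ₂, (1 - X j))
      * ((∏ i ∈ σ₁ ∩ σ₂, X i) * ∏ j ∈ τ₁ ∩ τ₂, (1 - X j)) := by
  classical
  have h1 := Finset.prod_union_inter (s₁ := σ₁) (s₂ := σ₂)
    (f := fun i => (X i : MvPolynomial (Fin n) (ZMod 2)))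
  have h2 := Finset.prod_union_inter (s₁ := τ₁) (s₂ := τ₂)
    (f := fun j => (1 - X j : MvPolynomial (Fin n) (ZMod 2)))
  conv_rhs => rw [mul_mul_mul_comm]
  rw [h1, h2]
  ring

lemma sqReduce_pm_mul_pm {n : ℕ} {σ₁ τ₁ σ₂ τ₂ : Finset (Fin n)} :
    sqReduce n (((∏ i ∈ σ₁, X i) * ∏ j ∈ τ₁, (1 - X j))
        * ((∏ i ∈ σ₂, X i) * ∏ j ∈ τ₂, (1 - X j))) = 0
    ∨ (Disjoint (σ₁ ∪ σ₂) (τ₁ ∪ τ₂) ∧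
      sqReduce n (((∏ i ∈ σ₁, X i) * ∏ j ∈ τ₁, (1 - X j))
        * ((∏ i ∈ σ₂, X i) * ∏ j ∈ τ₂, (1 - X j)))
        = (∏ i ∈ σ₁ ∪ σ₂, X i) * ∏ j ∈ τ₁ ∪ τ₂, (1 - X j) ∧
      ((∏ i ∈ σ₁, X i) * ∏ j ∈ τ₁, (1 - X j)) * ((∏ i ∈ σ₂, X i) * ∏ j ∈ τ₂, (1 - X j))
        - (∏ i ∈ σ₁ ∪ σ₂, X i) * ∏ j ∈ τ₁ ∪ τ₂, (1 - X j) ∈ boolIdeal n) := by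
  classical
  by_cases hdis : Disjoint (σ₁ ∪ σ₂) (τ₁ ∪ τ₂)
  · right
    have habs := absorb_prod (σ := σ₁ ∪ σ₂) (τ := τ₁ ∪ τ₂) (A := σ₁ ∩ σ₂) (B' := τ₁ ∩ τ₂)
      (Finset.inter_subset_left.trans Finset.subset_union_left)
      (Finset.inter_subset_left.trans Finset.subset_union_left)
    refine ⟨hdis, ?_, ?_⟩
    · rw [pm_prod_decomp]
      rw [sqReduce_eq_of_sub_mem habs]
      exact sqReduce_eq_self (pm_squarefree hdis)
    · rw [pm_prod_decomp]
      exact habs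
  · left
    rw [Finset.not_disjoint_iff] at hdis
    obtain ⟨k, hk1, hk2⟩ := hdis
    rw [pm_prod_decomp]
    apply sqReduce_eq_zero_of_mem
    have hsplit : ((∏ i ∈ σ₁ ∪ σ₂, X i) * ∏ j ∈ τ₁ ∪ τ₂, (1 - X j)
        : MvPolynomial (Fin n) (ZMod 2))
        = (((∏ i ∈ (σ₁ ∪ σ₂).erase k, X i) * ∏ j ∈ (τ₁ ∪ τ₂).erase k, (1 - X j)))
          * (X k * (1 - X k)) := by
      rw [← Finset.mul_prod_erase _ _ hk1, ← Finset.mul_prod_erase _ _ hk2]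
      ring
    rw [hsplit, mul_assoc]
    exact Ideal.mul_mem_left _ _ (Ideal.mul_mem_right _ _ (gen_mem_boolIdeal k))

lemma sqReduce_pm_mul_X_mem {n : ℕ} {σ τ : Finset (Fin n)} (hd : Disjoint σ τ) {k : Fin n}
    (hk : k ∈ σ) :
    sqReduce n (((∏ i ∈ σ, X i) * ∏ j ∈ τ, (1 - X j)) * X k)
      = (∏ i ∈ σ, X i) * ∏ j ∈ τ, (1 - X j) := by
  rw [sqReduce_eq_of_sub_mem (absorb_X hk)]
  exact sqReduce_eq_self (pm_squarefree hd)

lemma sqReduce_pm_mul_one_sub_X_mem {n : ℕ} {σ τ : Finset (Fin n)} (hd : Disjoint σ τ)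
    {k : Fin n} (hk : k ∈ τ) :
    sqReduce n (((∏ i ∈ σ, X i) * ∏ j ∈ τ, (1 - X j)) * (1 - X k))
      = (∏ i ∈ σ, X i) * ∏ j ∈ τ, (1 - X j) := by
  rw [sqReduce_eq_of_sub_mem (absorb_one_sub_X hk)]
  exact sqReduce_eq_self (pm_squarefree hd)

lemma sqReduce_pm_mul_X_opp {n : ℕ} {σ τ : Finset (Fin n)} {k : Fin n} (hk : k ∈ τ) :
    sqReduce n (((∏ i ∈ σ, X i) * ∏ j ∈ τ, (1 - X j)) * X k) = 0 := by
  apply sqReduce_eq_zero_of_mem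
  have hsplit : (((∏ i ∈ σ, X i) * ∏ j ∈ τ, (1 - X j)) * X k : MvPolynomial (Fin n) (ZMod 2))
      = ((∏ i ∈ σ, X i) * ∏ j ∈ τ.erase k, (1 - X j)) * (X k * (1 - X k)) := by
    rw [← Finset.mul_prod_erase τ _ hk]
    ring
  rw [hsplit]
  exact Ideal.mul_mem_left _ _ (gen_mem_boolIdeal k)

lemma sqReduce_pm_mul_one_sub_X_opp {n : ℕ} {σ τ : Finset (Fin n)} {k : Fin n} (hk : k ∈ σ) :
    sqReduce n (((∏ i ∈ σ, X i) * ∏ j ∈ τ, (1 - X j)) * (1 - X k)) = 0 := by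
  apply sqReduce_eq_zero_of_mem
  have hsplit : (((∏ i ∈ σ, X i) * ∏ j ∈ τ, (1 - X j)) * (1 - X k)
      : MvPolynomial (Fin n) (ZMod 2))
      = ((∏ i ∈ σ.erase k, X i) * ∏ j ∈ τ, (1 - X j)) * (X k * (1 - X k)) := by
    rw [← Finset.mul_prod_erase σ _ hk]
    ring
  rw [hsplit]
  exact Ideal.mul_mem_left _ _ (gen_mem_boolIdeal k)

lemma sqReduce_pm_mul_X_fresh {n : ℕ} {σ τ : Finset (Fin n)} (hd : Disjoint σ τ) {k : Fin n}
    (hk1 : k ∉ σ) (hk2 : k ∉ τ) :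
    sqReduce n (((∏ i ∈ σ, X i) * ∏ j ∈ τ, (1 - X j)) * X k)
      = ((∏ i ∈ σ, X i) * ∏ j ∈ τ, (1 - X j)) * X k := by
  classical
  have hsplit : (((∏ i ∈ σ, X i) * ∏ j ∈ τ, (1 - X j)) * X k : MvPolynomial (Fin n) (ZMod 2))
      = (∏ i ∈ insert k σ, X i) * ∏ j ∈ τ, (1 - X j) := by
    rw [Finset.prod_insert hk1]
    ring
  rw [hsplit]
  exact sqReduce_eq_self (pm_squarefree (by
    rw [Finset.disjoint_left]
    intro a ha
    rcases Finset.mem_insert.mp ha with h | h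
    · subst h; exact hk2
    · exact Finset.disjoint_left.mp hd h))

lemma sqReduce_pm_mul_one_sub_X_fresh {n : ℕ} {σ τ : Finset (Fin n)} (hd : Disjoint σ τ)
    {k : Fin n} (hk1 : k ∉ σ) (hk2 : k ∉ τ) :
    sqReduce n (((∏ i ∈ σ, X i) * ∏ j ∈ τ, (1 - X j)) * (1 - X k))
      = ((∏ i ∈ σ, X i) * ∏ j ∈ τ, (1 - X j)) * (1 - X k) := by
  classical
  have hsplit : (((∏ i ∈ σ, X i) * ∏ j ∈ τ, (1 - X j)) * (1 - X k)
      : MvPolynomial (Fin n) (ZMod 2))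
      = (∏ i ∈ σ, X i) * ∏ j ∈ insert k τ, (1 - X j) := by
    rw [Finset.prod_insert hk2]
    ring
  rw [hsplit]
  exact sqReduce_eq_self (pm_squarefree (by
    rw [Finset.disjoint_right]
    intro a ha
    rcases Finset.mem_insert.mp ha with h | h
    · subst h; exact hk1
    · exact Finset.disjoint_right.mp hd h))
lemma pm_deg_zero_eq_one {n : ℕ} {p : MvPolynomial (Fin n) (ZMod 2)}
    (hp : IsPseudoMonomial n p) (h0 : p.totalDegree = 0) : p = 1 := by
  obtain ⟨σ, τ, hd, rfl⟩ := hp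
  rw [pm_deg hd] at h0
  obtain ⟨hσ, hτ⟩ := Finset.union_eq_empty.mp (Finset.card_eq_zero.mp h0)
  simp [hσ, hτ]

lemma totalDegree_one_sub_X {n : ℕ} (j : Fin n) :
    (1 - X j : MvPolynomial (Fin n) (ZMod 2)).totalDegree = 1 := by
  have h := pm_deg (n := n) (σ := ∅) (τ := {j}) (by simp)
  simpa using h

lemma X_mem_CF {n : ℕ} {c : Fin n → ZMod 2} {k : Fin n} (hk : c k = 0) :
    (X k : MvPolynomial (Fin n) (ZMod 2)) ∈ CF n (neuralIdeal n {c}) := by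
  have hpm : IsPseudoMonomial n (X k : MvPolynomial (Fin n) (ZMod 2)) :=
    ⟨{k}, ∅, by simp, by simp⟩
  have hmem : (X k : MvPolynomial (Fin n) (ZMod 2)) ∈ neuralIdeal n {c} := by
    refine pm_mem_neuralIdeal hpm ?_
    intro v hv
    rw [Set.mem_singleton_iff] at hv
    subst hv
    rw [eval_X, hk]
  refine ⟨hmem, hpm, ?_⟩
  rintro ⟨p, ppm, pJ, pdeg, q, hq⟩
  rw [totalDegree_X] at pdeg
  have hp1 : p = 1 := pm_deg_zero_eq_one ppm (by omega)
  subst hp1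
  have := eval_eq_zero_of_mem_neuralIdeal pJ (Set.mem_singleton c)
  rw [map_one] at this
  exact absurd this (by decide)

lemma one_sub_X_mem_CF {n : ℕ} {c : Fin n → ZMod 2} {k : Fin n} (hk : c k = 1) :
    (1 - X k : MvPolynomial (Fin n) (ZMod 2)) ∈ CF n (neuralIdeal n {c}) := by
  have hpm : IsPseudoMonomial n (1 - X k : MvPolynomial (Fin n) (ZMod 2)) :=
    ⟨∅, {k}, by simp, by simp⟩
  have hmem : (1 - X k : MvPolynomial (Fin n) (ZMod 2)) ∈ neuralIdeal n {c} := by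
    refine pm_mem_neuralIdeal hpm ?_
    intro v hv
    rw [Set.mem_singleton_iff] at hv
    subst hv
    rw [map_sub, map_one, eval_X, hk, sub_self]
  refine ⟨hmem, hpm, ?_⟩
  rintro ⟨p, ppm, pJ, pdeg, q, hq⟩
  rw [totalDegree_one_sub_X] at pdeg
  have hp1 : p = 1 := pm_deg_zero_eq_one ppm (by omega)
  subst hp1
  have := eval_eq_zero_of_mem_neuralIdeal pJ (Set.mem_singleton c)
  rw [map_one] at this
  exact absurd this (by decide)
/-- if `g ∈ CF(J_C)` and `g(c) = 0` then `g ∈ MP(C, {c})`, and every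
reduced product `(g·(x_j - c_j))_R` is `0`, `g`, or a proper multiple of `g`. -/
theorem stmt19 (n : ℕ) (hn : 1 ≤ n) (Co : Set (Fin n → ZMod 2)) (c : Fin n → ZMod 2)
    (g : MvPolynomial (Fin n) (ZMod 2))
    (hg : g ∈ CF n (neuralIdeal n Co)) (hgc : eval c g = 0) :
    g ∈ minReducedProducts n Co {c} ∧
      ∀ j : Fin n, sqReduce n (g * (X j - C (c j))) = 0 ∨
        sqReduce n (g * (X j - C (c j))) = g ∨
        ∃ p : MvPolynomial (Fin n) (ZMod 2), 1 ≤ p.totalDegree ∧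
          sqReduce n (g * (X j - C (c j))) = g * p := by
  classical
  have hgCF := hg
  obtain ⟨hgJ, hgpm, hgmin⟩ := hg
  obtain ⟨σ, τ, hd, hgF⟩ := hgpm
  have hg0 : g ≠ 0 := by rw [hgF]; exact pm_ne_zero hd
  -- find a vanishing linear factor
  have hev : ((∏ i ∈ σ, c i) * ∏ j ∈ τ, (1 - c j) : ZMod 2) = 0 := by
    rw [hgF, map_mul, map_prod, map_prod] at hgc
    simpa using hgc
  have hfac : (∃ i ∈ σ, c i = 0) ∨ (∃ j ∈ τ, c j = 1) := by
    rcases mul_eq_zero.mp hev with h | h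
    · left
      obtain ⟨i, hi, h0⟩ := Finset.prod_eq_zero_iff.mp h
      exact ⟨i, hi, h0⟩
    · right
      obtain ⟨j, hj, h0⟩ := Finset.prod_eq_zero_iff.mp h
      exact ⟨j, hj, (by decide : ∀ a : ZMod 2, 1 - a = 0 → a = 1) (c j) h0⟩
  have hP : g ∈ reducedProducts n Co {c} := by
    rcases hfac with ⟨i, hi, h0⟩ | ⟨j, hj, h1⟩
    · exact ⟨g, hgCF, X i, X_mem_CF h0,
        by rw [hgF, sqReduce_pm_mul_X_mem hd hi]⟩
    · exact ⟨g, hgCF, 1 - X j, one_sub_X_mem_CF h1,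
        by rw [hgF, sqReduce_pm_mul_one_sub_X_mem hd hj]⟩
  constructor
  · refine ⟨hP, hg0, ?_⟩
    rintro ⟨f, ⟨f₁, hf₁, f₂, hf₂, rfl⟩, p, hpdeg, hgfp⟩
    obtain ⟨σ₁, τ₁, hd1, hF1⟩ := hf₁.2.1
    obtain ⟨σ₂, τ₂, hd2, hF2⟩ := hf₂.2.1
    rw [hF1, hF2] at hgfp
    rcases sqReduce_pm_mul_pm (n := n) (σ₁ := σ₁) (τ₁ := τ₁) (σ₂ := σ₂) (τ₂ := τ₂)
      with h0 | ⟨hdis, heq, hsub⟩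
    · rw [h0, zero_mul] at hgfp
      exact hg0 hgfp
    · rw [heq] at hgfp
      have hp0 : p ≠ 0 := fun h => hg0 (by rw [hgfp, h, mul_zero])
      have hFJ : ((∏ i ∈ σ₁ ∪ σ₂, X i) * ∏ j ∈ τ₁ ∪ τ₂, (1 - X j)
          : MvPolynomial (Fin n) (ZMod 2)) ∈ neuralIdeal n Co := by
        refine pm_mem_neuralIdeal ⟨σ₁ ∪ σ₂, τ₁ ∪ τ₂, hdis, rfl⟩ ?_
        intro v hv
        have hBv := eval_eq_zero_of_mem_boolIdeal hsub v
        rw [map_sub, sub_eq_zero] at hBv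
        rw [← hBv, ← hF1, ← hF2, map_mul,
          eval_eq_zero_of_mem_neuralIdeal hf₁.1 hv, zero_mul]
      have hdg : g.totalDegree
          = p.totalDegree + ((σ₁ ∪ σ₂) ∪ (τ₁ ∪ τ₂)).card := by
        rw [hgfp, pm_mul_deg hdis hp0]
      have hdF := pm_deg hdis
      refine hgmin ⟨_, ⟨σ₁ ∪ σ₂, τ₁ ∪ τ₂, hdis, rfl⟩, hFJ, ?_, p, hgfp⟩
      omega
  · intro j
    rcases (by decide : ∀ a : ZMod 2, a = 0 ∨ a = 1) (c j) with h | h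
    · have hXj : (X j - C (c j) : MvPolynomial (Fin n) (ZMod 2)) = X j := by
        rw [h, map_zero, sub_zero]
      rw [hXj]
      by_cases hσ : j ∈ σ
      · right; left
        rw [hgF, sqReduce_pm_mul_X_mem hd hσ]
      · by_cases hτ : j ∈ τ
        · left
          rw [hgF]
          exact sqReduce_pm_mul_X_opp hτ
        · right; right
          exact ⟨X j, le_of_eq (totalDegree_X j).symm,
            by rw [hgF, sqReduce_pm_mul_X_fresh hd hσ hτ]⟩
    · have hXj : (X j - C (c j) : MvPolynomial (Fin n) (ZMod 2)) = 1 - X j := by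
        rw [h, map_one]
        linear_combination (X j - 1 : MvPolynomial (Fin n) (ZMod 2)) * two_eq_zero' (n := n)
      rw [hXj]
      by_cases hτ : j ∈ τ
      · right; left
        rw [hgF, sqReduce_pm_mul_one_sub_X_mem hd hτ]
      · by_cases hσ : j ∈ σ
        · left
          rw [hgF]
          exact sqReduce_pm_mul_one_sub_X_opp hσ
        · right; right
          exact ⟨1 - X j, le_of_eq (totalDegree_one_sub_X j).symm,
            by rw [hgF, sqReduce_pm_mul_one_sub_X_fresh hd hσ hτ]⟩
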